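/- Let m, k, s be integers with k ≥ 1, 1 ≤ s ≤ m−2 and k + s ≤ m, and let d_1, …, d_s be positive integers with d_1⋯d_s > 2. Assume t := ∑_{i=1}^s binom(d_i + k, k) − (k+1)(m−k) > 0. Then there exists at least one tuple of nonzero homogeneous polynomials g_1, …, g_s ∈ ℂ[x_0, …, x_m] with deg g_i = d_i admitting a (k+1)-dimensional ℂ-linear subspace L ⊆ ℂ^{m+1} on which all g_i vanish identically, and there also exists at least one such tuple admitting no such subspace (i.e., ∅ ≠ W_{d,k} ⊊ S*_{d}). -/

import Mathlib

open MvPolynomial Module Set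
open scoped ENNReal

section count
variable {ι : Type*} [DecidableEq ι]

omit [DecidableEq ι] in
lemma sum_id_eq_sumid {f : ι →₀ ℕ} : (f.sum fun _ x => x) = f.sum fun _ => id := rfl

noncomputable def symEquivAntidiag (P : Finset ι) (n : ℕ) :
    Sym {x // x ∈ P} n ≃ {f // f ∈ P.finsuppAntidiag n} where
  toFun σ := ⟨Multiset.toFinsupp (σ.1.map Subtype.val), by
    rw [Finset.mem_finsuppAntidiag']
    refine ⟨?_, ?_⟩
    · rw [sum_id_eq_sumid, Multiset.toFinsupp_sum_eq, Multiset.card_map, σ.2]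
    · intro x hx
      rw [Multiset.toFinsupp_support, Multiset.mem_toFinset] at hx
      obtain ⟨y, hy, rfl⟩ := Multiset.mem_map.mp hx
      exact y.2⟩
  invFun f := ⟨(Finsupp.toMultiset f.1).pmap (fun x h => (⟨x, h⟩ : {x // x ∈ P}))
      (fun x hx => (Finset.mem_finsuppAntidiag'.mp f.2).2 (by
        rwa [Finsupp.mem_toMultiset] at hx)), by
    rw [Multiset.card_pmap, Finsupp.card_toMultiset, ← sum_id_eq_sumid,
      (Finset.mem_finsuppAntidiag'.mp f.2).1]⟩
  left_inv σ := by
    apply Subtype.ext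
    apply Multiset.map_injective (Subtype.val_injective)
    show Multiset.map _ (Multiset.pmap _ _ _) = _
    rw [Multiset.map_pmap]
    simp [Multiset.pmap_eq_map, Multiset.toFinsupp_toMultiset]
  right_inv f := by
    apply Subtype.ext
    show Multiset.toFinsupp (Multiset.map _ (Multiset.pmap _ _ _)) = _
    rw [Multiset.map_pmap]
    simp [Multiset.pmap_eq_map, Finsupp.toMultiset_toFinsupp]

lemma card_finsuppAntidiag (P : Finset ι) (n : ℕ) :
    (P.finsuppAntidiag n).card = Nat.multichoose P.card n := by
  rw [← Fintype.card_coe, ← Fintype.card_congr (symEquivAntidiag P n),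
    Sym.card_sym_eq_multichoose, Fintype.card_coe]

lemma card_finsuppAntidiag' {P : Finset ι} {k n : ℕ} (hP : P.card = k + 1) :
    (P.finsuppAntidiag n).card = (n + k).choose k := by
  rw [card_finsuppAntidiag, hP, Nat.multichoose_eq]
  have h1 : k + 1 + n - 1 = n + k := by omega
  rw [h1]
  have h2 := Nat.choose_symm (Nat.le_add_left k n)
  rw [Nat.add_sub_cancel] at h2
  omega
end count

section pivot
variable {ι : Type*} [Fintype ι] [DecidableEq ι]

lemma exists_pivots (L : Submodule ℂ (ι → ℂ)) {r : ℕ} (hL : Module.finrank ℂ L = r) :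
    ∃ P : Finset ι, P.card = r ∧ ∃ u : {p // p ∈ P} → (ι → ℂ),
      (∀ p, (u p) ∈ L) ∧ (∀ p q : {p // p ∈ P}, u p q.1 = if q = p then 1 else 0) := by
  classical
  haveI : FiniteDimensional ℂ ↥L := inferInstance
  haveI : Module.IsReflexive ℂ ↥L := inferInstance
  set f : ι → Module.Dual ℂ L := fun j => (LinearMap.proj j).comp L.subtype with hf
  have hspan : Submodule.span ℂ (range f) = ⊤ := by
    apply Submodule.span_eq_top_of_ne_zero
    rintro z hz
    have hz1 : (z : ι → ℂ) ≠ 0 := fun h => hz (by exact_mod_cast Subtype.ext h)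
    obtain ⟨j, hj⟩ := Function.ne_iff.mp hz1
    exact ⟨f j, mem_range_self j, hj⟩
  obtain ⟨b, hbsub, hbspan, hbli⟩ := exists_linearIndependent ℂ (range f)
  have hbfin : b.Finite := (Set.finite_range f).subset hbsub
  haveI := hbfin.fintype
  have hchoose : ∀ x : b, ∃ i : ι, f i = (x : Module.Dual ℂ L) := fun x => hbsub x.2
  let jf : b → ι := fun x => (hchoose x).choose
  have hjf : ∀ x : b, f (jf x) = (x : Module.Dual ℂ L) := fun x => (hchoose x).choose_spec
  have hjfinj : Function.Injective jf := by
    intro x y hxy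
    apply Subtype.ext
    rw [← hjf x, ← hjf y, hxy]
  set P : Finset ι := Finset.image jf Finset.univ with hP
  have hmem : ∀ p : {p // p ∈ P}, f p.1 ∈ b := by
    rintro ⟨p, hp⟩
    obtain ⟨x, -, rfl⟩ := Finset.mem_image.mp hp
    simpa [hjf x] using x.2
  set g : {p // p ∈ P} → Module.Dual ℂ L := fun p => f p.1 with hg
  have hginj : Function.Injective (fun p : {p // p ∈ P} => (⟨f p.1, hmem p⟩ : b)) := by
    rintro ⟨p, hp⟩ ⟨q, hq⟩ hpq
    obtain ⟨x, -, rfl⟩ := Finset.mem_image.mp hp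
    obtain ⟨y, -, rfl⟩ := Finset.mem_image.mp hq
    simp only [Subtype.mk.injEq, hjf] at hpq
    exact Subtype.ext (congrArg jf (Subtype.ext hpq))
  have hgli : LinearIndependent ℂ g := by
    have := hbli.comp _ hginj
    exact this
  have hgrange : range g = b := by
    ext x
    constructor
    · rintro ⟨p, rfl⟩; exact hmem p
    · intro hx
      refine ⟨⟨jf ⟨x, hx⟩, Finset.mem_image_of_mem _ (Finset.mem_univ _)⟩, ?_⟩
      exact hjf ⟨x, hx⟩
  have hgspan : ⊤ ≤ Submodule.span ℂ (range g) := by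
    rw [hgrange, hbspan, hspan]
  let basis : Basis {p // p ∈ P} ℂ (Module.Dual ℂ L) := Basis.mk hgli hgspan
  have hcard : P.card = r := by
    have h1 := Module.finrank_eq_card_basis basis
    rw [Subspace.dual_finrank_eq, hL, Fintype.card_coe] at h1
    omega
  refine ⟨P, hcard, fun p => ((evalEquiv ℂ L).symm (basis.coord p) : ι → ℂ), fun p => Submodule.coe_mem _, ?_⟩
  intro p q
  have h1 : (( (evalEquiv ℂ L).symm (basis.coord p) : L) : ι → ℂ) q.1
      = f q.1 ((evalEquiv ℂ L).symm (basis.coord p)) := rfl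
  show (((evalEquiv ℂ L).symm (basis.coord p) : L) : ι → ℂ) q.1 = _
  rw [h1]
  have h2 : f q.1 ((evalEquiv ℂ L).symm (basis.coord p)) = (basis.coord p) (f q.1) :=
    Module.apply_evalEquiv_symm_apply ℂ L (f q.1) (basis.coord p)
  have h3 : f q.1 = basis q := by rw [hg] at *; rw [Basis.coe_mk (v := g)]
  rw [h2, h3, Basis.coord_apply, Basis.repr_self, Finsupp.single_apply]
end pivot

section poly
variable {ι : Type*}

lemma aeval_eq_eval' (w : ι → ℂ) (p : MvPolynomial ι ℂ) : aeval w p = eval w p := by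
  rw [aeval_def, Algebra.algebraMap_self]; rfl

lemma eval_bind₁' {ι' : Type*} (w : ι' → ℂ) (f : ι → MvPolynomial ι' ℂ) (p : MvPolynomial ι ℂ) :
    eval w (bind₁ f p) = eval (fun j => eval w (f j)) p := by
  have := aeval_bind₁ (R := ℂ) (S := ℂ) w f p
  simpa [aeval_eq_eval'] using this

lemma bind₁_monomial_ite [Fintype ι] [DecidableEq ι] (P : Finset ι) (v : ι →₀ ℕ) (a : ℂ) :
    bind₁ (fun j => if j ∈ P then X j else (0 : MvPolynomial ι ℂ)) (monomial v a)
      = if v.support ⊆ P then monomial v a else 0 := by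
  rw [monomial_eq, map_mul, bind₁_C_right, Finsupp.prod, map_prod]
  by_cases hs : v.support ⊆ P
  · rw [if_pos hs]
    have hmap : ∀ j ∈ v.support, (bind₁ (fun j => if j ∈ P then X j else (0 : MvPolynomial ι ℂ))) (X j ^ v j) = X j ^ v j := by
      intro j hj
      rw [map_pow, bind₁_X_right, if_pos (hs hj)]
    rw [Finset.prod_congr rfl hmap]
  · rw [if_neg hs]
    obtain ⟨j0, hj0, hj0P⟩ := Finset.not_subset.mp hs
    have hz : (bind₁ (fun j => if j ∈ P then X j else (0 : MvPolynomial ι ℂ))) (X j0 ^ v j0) = 0 := by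
      rw [map_pow, bind₁_X_right, if_neg hj0P]
      exact zero_pow (Finsupp.mem_support_iff.mp hj0)
    rw [Finset.prod_eq_zero hj0 hz, mul_zero]

lemma coeff_eq_zero_of_zero_on_coords [Fintype ι] [DecidableEq ι] (P : Finset ι) (h : MvPolynomial ι ℂ)
    (hv : ∀ w : ι → ℂ, (∀ j, j ∉ P → w j = 0) → eval w h = 0)
    {σ : ι →₀ ℕ} (hσ : σ.support ⊆ P) : coeff σ h = 0 := by
  set τ0 : ι → MvPolynomial ι ℂ := fun j => if j ∈ P then X j else 0 with hτ0
  have hq : bind₁ τ0 h = 0 := by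
    apply MvPolynomial.funext
    intro x
    rw [eval_bind₁', map_zero]
    apply hv
    intro j hj
    simp [hτ0, hj]
  have h2 : (0 : MvPolynomial ι ℂ) = ∑ v ∈ h.support, bind₁ τ0 (monomial v (coeff v h)) := by
    rw [← map_sum, ← as_sum, hq]
  have h3 := congrArg (coeff σ) h2
  rw [coeff_zero, MvPolynomial.coeff_sum] at h3
  by_cases hσmem : σ ∈ h.support
  · rw [Finset.sum_eq_single_of_mem σ hσmem] at h3
    · rwa [bind₁_monomial_ite, if_pos hσ, coeff_monomial, if_pos rfl, eq_comm] at h3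
    · intro v hv' hne
      rw [bind₁_monomial_ite]
      split_ifs with h'
      · rw [coeff_monomial, if_neg hne]
      · exact coeff_zero σ
  · exact MvPolynomial.notMem_support_iff.mp hσmem

lemma isHomogeneous_bind₁ {ι' : Type*} {f : ι → MvPolynomial ι' ℂ} (hf : ∀ j, (f j).IsHomogeneous 1)
    {p : MvPolynomial ι ℂ} {n : ℕ} (hp : p.IsHomogeneous n) :
    (bind₁ f p).IsHomogeneous n := by
  have hrw : bind₁ f p = ∑ v ∈ p.support, bind₁ f (monomial v (coeff v p)) := by
    rw [← map_sum, ← as_sum]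
  rw [hrw]
  apply IsHomogeneous.sum
  intro v hv
  have hds : ∑ j ∈ v.support, v j = n := by
    have h1 : (Finsupp.degree v) = n := by
      rw [Finsupp.degree_eq_weight_one]
      exact hp (MvPolynomial.mem_support_iff.mp hv)
    simpa [Finsupp.degree_apply] using h1
  rw [monomial_eq, map_mul, bind₁_C_right, Finsupp.prod, map_prod]
  have : ∀ j ∈ v.support, ((bind₁ f) (X j ^ v j)).IsHomogeneous (v j) := by
    intro j hj
    rw [map_pow, bind₁_X_right]
    simpa using (hf j).pow (v j)
  have hprod := IsHomogeneous.prod v.support _ _ this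
  rw [hds] at hprod
  simpa using (isHomogeneous_C ι' _).mul hprod

lemma eq_sum_monomial_of_support_subset {S : Finset (ι →₀ ℕ)} {h : MvPolynomial ι ℂ}
    (hs : h.support ⊆ S) : h = ∑ σ ∈ S, monomial σ (coeff σ h) := by
  conv_lhs => rw [as_sum h]
  exact Finset.sum_subset hs (fun x _ hx => by
    rw [MvPolynomial.notMem_support_iff.mp hx]
    exact map_zero _)
end poly

section smooth
variable {E : Type*} [NormedAddCommGroup E] [NormedSpace ℝ E] {ι : Type*}

lemma cdcoeff_mul {f g : E → MvPolynomial ι ℂ}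
    (hf : ∀ ρ, ContDiff ℝ 1 fun x => coeff ρ (f x))
    (hg : ∀ ρ, ContDiff ℝ 1 fun x => coeff ρ (g x)) :
    ∀ ρ, ContDiff ℝ 1 fun x => coeff ρ (f x * g x) := by
  classical
  intro ρ
  have h : (fun x => coeff ρ (f x * g x))
      = fun x => ∑ p ∈ Finset.HasAntidiagonal.antidiagonal ρ, coeff p.1 (f x) * coeff p.2 (g x) := by
    funext x; rw [coeff_mul]
  rw [h]
  exact ContDiff.sum fun p _ => (hf p.1).mul (hg p.2)

lemma cdcoeff_pow {f : E → MvPolynomial ι ℂ}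
    (hf : ∀ ρ, ContDiff ℝ 1 fun x => coeff ρ (f x)) (n : ℕ) :
    ∀ ρ, ContDiff ℝ 1 fun x => coeff ρ ((f x) ^ n) := by
  induction n with
  | zero =>
    intro ρ
    simp only [pow_zero]
    exact contDiff_const
  | succ n ih =>
    intro ρ
    have h : (fun x => coeff ρ ((f x) ^ (n+1))) = fun x => coeff ρ ((f x) ^ n * f x) := by
      funext x; rw [pow_succ]
    rw [h]
    exact cdcoeff_mul ih hf ρ

lemma cdcoeff_prod {α : Type*} (t : Finset α) (f : α → E → MvPolynomial ι ℂ)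
    (hf : ∀ a ∈ t, ∀ ρ, ContDiff ℝ 1 fun x => coeff ρ (f a x)) :
    ∀ ρ, ContDiff ℝ 1 fun x => coeff ρ (∏ a ∈ t, f a x) := by
  classical
  induction t using Finset.induction_on with
  | empty =>
    intro ρ
    simp only [Finset.prod_empty]
    exact contDiff_const
  | @insert a t ha ih =>
    intro ρ
    have h : (fun x => coeff ρ (∏ b ∈ insert a t, f b x))
        = fun x => coeff ρ (f a x * ∏ b ∈ t, f b x) := by
      funext x; rw [Finset.prod_insert ha]
    rw [h]
    exact cdcoeff_mul (hf a (Finset.mem_insert_self a t))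
      (ih (fun b hb => hf b (Finset.mem_insert_of_mem hb))) ρ
end smooth

section main
variable (m s : ℕ) (d : Fin s → ℕ)

abbrev Mon (di : ℕ) : Finset (Fin (m+1) →₀ ℕ) := Finset.univ.finsuppAntidiag di

abbrev Vsp := Π _i : Fin s, ({σ // σ ∈ Mon m (d _i)} → ℂ)

abbrev MonP (P : Finset (Fin (m+1))) (di : ℕ) : Finset (Fin (m+1) →₀ ℕ) :=
  Mon m di \ P.finsuppAntidiag di

abbrev Esp (P : Finset (Fin (m+1))) : Type :=
  (({j : Fin (m+1) // j ∉ P} × {p : Fin (m+1) // p ∈ P}) → ℂ) ×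
  (Π i : Fin s, ({σ // σ ∈ MonP m P (d i)} → ℂ))

noncomputable def tauP (P : Finset (Fin (m+1)))
    (B : ({j : Fin (m+1) // j ∉ P} × {p : Fin (m+1) // p ∈ P}) → ℂ) (j : Fin (m+1)) :
    MvPolynomial (Fin (m+1)) ℂ :=
  X j + ∑ p : {p : Fin (m+1) // p ∈ P}, (if h : j ∈ P then 0 else B (⟨j, h⟩, p)) • X p.1

lemma tauP_mem {P : Finset (Fin (m+1))} {B} {j : Fin (m+1)} (hj : j ∈ P) :
    tauP m P B j = X j := by
  simp [tauP, hj]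

lemma tauP_not_mem {P : Finset (Fin (m+1))} {B} {j : Fin (m+1)} (hj : j ∉ P) :
    tauP m P B j = X j + ∑ p : {p : Fin (m+1) // p ∈ P}, B (⟨j, hj⟩, p) • X p.1 := by
  simp [tauP, hj]

lemma tauP_isHomogeneous (P : Finset (Fin (m+1))) (B) (j : Fin (m+1)) :
    (tauP m P B j).IsHomogeneous 1 := by
  apply (isHomogeneous_X ℂ j).add
  apply IsHomogeneous.sum
  intro p _
  exact (homogeneousSubmodule (Fin (m+1)) ℂ 1).smul_mem _ (isHomogeneous_X ℂ p.1)

lemma bind₁_tauP_neg (P : Finset (Fin (m+1))) (B) (g : MvPolynomial (Fin (m+1)) ℂ) :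
    bind₁ (tauP m P (-B)) (bind₁ (tauP m P B) g) = g := by
  rw [bind₁_bind₁]
  have key : (fun j => bind₁ (tauP m P (-B)) (tauP m P B j)) = X := by
    funext j
    by_cases hj : j ∈ P
    · rw [tauP_mem m hj, bind₁_X_right, tauP_mem m hj]
    · rw [tauP_not_mem m hj, map_add, bind₁_X_right, tauP_not_mem m hj, map_sum]
      have hterm : ∀ p : {p : Fin (m+1) // p ∈ P},
          bind₁ (tauP m P (-B)) (B (⟨j, hj⟩, p) • X p.1) = B (⟨j, hj⟩, p) • X p.1 := by
        intro p
        rw [map_smul, bind₁_X_right, tauP_mem m p.2]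
      rw [Finset.sum_congr rfl (fun p _ => hterm p)]
      rw [add_assoc, ← Finset.sum_add_distrib]
      have : ∀ p : {p : Fin (m+1) // p ∈ P},
          ((-B) (⟨j, hj⟩, p)) • (X p.1 : MvPolynomial (Fin (m+1)) ℂ) + B (⟨j, hj⟩, p) • X p.1 = 0 := by
        intro p
        rw [← add_smul]
        simp
      rw [Finset.sum_congr rfl (fun p _ => this p), Finset.sum_const_zero, add_zero]
  rw [key, bind₁_X_left, AlgHom.id_apply]

noncomputable def hpol (P : Finset (Fin (m+1)))
    (c : Π i : Fin s, ({σ // σ ∈ MonP m P (d i)} → ℂ)) (i : Fin s) :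
    MvPolynomial (Fin (m+1)) ℂ :=
  ∑ σ : {σ // σ ∈ MonP m P (d i)}, monomial σ.1 (c i σ)

noncomputable def Phi (P : Finset (Fin (m+1))) : Esp m s d P → Vsp m s d :=
  fun x i ρ => coeff ρ.1 (bind₁ (tauP m P x.1) (hpol m s d P x.2 i))

lemma contDiff_Phi (P : Finset (Fin (m+1))) : ContDiff ℝ 1 (Phi m s d P) := by
  rw [contDiff_pi]
  intro i
  rw [contDiff_pi]
  intro ρ
  -- Phi x i ρ = ∑ σ, x.2 i σ * coeff ρ (bind₁ (tauP x.1) (monomial σ 1))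
  have hrw : (fun x : Esp m s d P => Phi m s d P x i ρ)
      = fun x => ∑ σ : {σ // σ ∈ MonP m P (d i)},
          x.2 i σ * coeff ρ.1 (bind₁ (tauP m P x.1) (monomial σ.1 1)) := by
    funext x
    show coeff ρ.1 (bind₁ (tauP m P x.1) (hpol m s d P x.2 i)) = _
    rw [hpol, map_sum, MvPolynomial.coeff_sum]
    apply Finset.sum_congr rfl
    intro σ _
    have : monomial σ.1 (x.2 i σ) = C (x.2 i σ) * monomial σ.1 1 := by
      rw [C_mul_monomial, mul_one]
    rw [this, map_mul, bind₁_C_right, coeff_C_mul]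
  rw [hrw]
  apply ContDiff.sum
  intro σ _
  have h1 : ContDiff ℝ 1 (fun x : Esp m s d P => x.2 i σ) :=
    contDiff_pi.mp (contDiff_pi.mp contDiff_snd i) σ
  apply h1.mul
  -- coeff of bind₁ (tauP) (monomial σ 1) = coeff of ∏ (tauP j)^(σ j)
  have h2 : (fun x : Esp m s d P => coeff ρ.1 (bind₁ (tauP m P x.1) (monomial σ.1 1)))
      = fun x => coeff ρ.1 (∏ j ∈ σ.1.support, (tauP m P x.1 j) ^ (σ.1 j)) := by
    funext x
    rw [monomial_eq, C_1, one_mul, Finsupp.prod, map_prod]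
    congr 1
    apply Finset.prod_congr rfl
    intro j _
    rw [map_pow, bind₁_X_right]
  rw [h2]
  apply cdcoeff_prod
  intro j _
  apply cdcoeff_pow
  -- base: coeff of tauP
  intro ρ'
  have h3 : (fun x : Esp m s d P => coeff ρ' (tauP m P x.1 j))
      = fun x => coeff ρ' (X j : MvPolynomial (Fin (m+1)) ℂ)
          + ∑ p : {p : Fin (m+1) // p ∈ P},
              (if h : j ∈ P then 0 else x.1 (⟨j, h⟩, p)) * coeff ρ' (X p.1 : MvPolynomial (Fin (m+1)) ℂ) := by
    funext x
    rw [tauP, coeff_add, MvPolynomial.coeff_sum]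
    congr 1
  rw [h3]
  apply ContDiff.add contDiff_const
  apply ContDiff.sum
  intro p _
  by_cases hj : j ∈ P
  · simp only [dif_pos hj, zero_mul]
    exact contDiff_const
  · simp only [dif_neg hj]
    exact (contDiff_pi.mp (contDiff_fst : ContDiff ℝ 1 (fun x : Esp m s d P => x.1)) ((⟨j, hj⟩ : {j : Fin (m+1) // j ∉ P}), p)).mul contDiff_const


lemma covering (k : ℕ) (g : Fin s → MvPolynomial (Fin (m+1)) ℂ)
    (hg : ∀ i, (g i).IsHomogeneous (d i))
    (L : Submodule ℂ (Fin (m + 1) → ℂ)) (hfin : Module.finrank ℂ L = k + 1)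
    (hvan : ∀ i, ∀ v ∈ L, eval v (g i) = 0) :
    ∃ P : Finset (Fin (m+1)), P.card = k + 1 ∧
      (fun i ρ => coeff ρ.1 (g i)) ∈ Set.range (Phi m s d P) := by
  classical
  obtain ⟨P, hPcard, u, humem, hucoord⟩ := exists_pivots L hfin
  set A : ({j : Fin (m+1) // j ∉ P} × {p : Fin (m+1) // p ∈ P}) → ℂ :=
    fun jp => u jp.2 jp.1.1 with hA
  set h : Fin s → MvPolynomial (Fin (m+1)) ℂ := fun i => bind₁ (tauP m P A) (g i) with hh
  have hvanish : ∀ i, ∀ w : Fin (m+1) → ℂ, (∀ j, j ∉ P → w j = 0) → eval w (h i) = 0 := by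
    intro i w hw
    rw [hh]
    show eval w (bind₁ (tauP m P A) (g i)) = 0
    rw [eval_bind₁']
    set v : Fin (m+1) → ℂ := fun j => eval w (tauP m P A j) with hv
    have hvL : v ∈ L := by
      have hveq : v = ∑ p : {p : Fin (m+1) // p ∈ P}, w p.1 • u p := by
        funext j
        have hrhs : (∑ p : {p : Fin (m+1) // p ∈ P}, w p.1 • u p) j
            = ∑ p : {p : Fin (m+1) // p ∈ P}, w p.1 * u p j := by
          rw [Finset.sum_apply]
          rfl
        by_cases hj : j ∈ P
        · have hlhs : v j = w j := by
            rw [hv]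
            show eval w (tauP m P A j) = w j
            rw [tauP_mem m hj, eval_X]
          rw [hlhs, hrhs]
          have : ∀ p : {p : Fin (m+1) // p ∈ P}, w p.1 * u p j
              = if (⟨j, hj⟩ : {p : Fin (m+1) // p ∈ P}) = p then w p.1 else 0 := by
            intro p
            have := hucoord p ⟨j, hj⟩
            rw [this]
            by_cases hpq : (⟨j, hj⟩ : {p : Fin (m+1) // p ∈ P}) = p <;> simp [hpq]
          rw [Finset.sum_congr rfl (fun p _ => this p), Finset.sum_ite_eq]
          simp
        · have hlhs : v j = ∑ p : {p : Fin (m+1) // p ∈ P}, A (⟨j, hj⟩, p) * w p.1 := by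
            rw [hv]
            show eval w (tauP m P A j) = _
            rw [tauP_not_mem m hj, map_add, eval_X, map_sum, hw j hj, zero_add]
            apply Finset.sum_congr rfl
            intro p _
            rw [smul_eq_C_mul, map_mul, eval_C, eval_X]
          rw [hlhs, hrhs]
          apply Finset.sum_congr rfl
          intro p _
          rw [hA]
          ring
      rw [hveq]
      exact Submodule.sum_mem L (fun p _ => Submodule.smul_mem L _ (humem p))
    exact hvan i v hvL
  have hhom : ∀ i, (h i).IsHomogeneous (d i) :=
    fun i => isHomogeneous_bind₁ (tauP_isHomogeneous m P A) (hg i)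
  have hcoeffzero : ∀ i σ, σ ∈ P.finsuppAntidiag (d i) → coeff σ (h i) = 0 := by
    intro i σ hσ
    exact coeff_eq_zero_of_zero_on_coords P (h i) (hvanish i)
      (Finset.mem_finsuppAntidiag.mp hσ).2
  have hsupp : ∀ i, (h i).support ⊆ MonP m P (d i) := by
    intro i σ hσ
    rw [Finset.mem_sdiff]
    constructor
    · rw [Finset.mem_finsuppAntidiag']
      refine ⟨?_, Finset.subset_univ _⟩
      have hdeg : Finsupp.degree σ = d i := by
        rw [Finsupp.degree_eq_weight_one]
        exact hhom i (MvPolynomial.mem_support_iff.mp hσ)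
      simpa [Finsupp.degree_apply, Finsupp.sum] using hdeg
    · intro hmem
      exact absurd (hcoeffzero i σ hmem) (MvPolynomial.mem_support_iff.mp hσ)
  refine ⟨P, hPcard, ⟨(-A, fun i σ => coeff σ.1 (h i)), ?_⟩⟩
  funext i ρ
  show coeff ρ.1 (bind₁ (tauP m P (-A)) (hpol m s d P (fun i σ => coeff σ.1 (h i)) i))
      = coeff ρ.1 (g i)
  have hpoleq : hpol m s d P (fun i σ => coeff σ.1 (h i)) i = h i := by
    rw [hpol, Finset.sum_coe_sort (MonP m P (d i)) (fun σ => monomial σ (coeff σ (h i)))]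
    exact (eq_sum_monomial_of_support_subset (hsupp i)).symm
  rw [hpoleq, hh]
  show coeff ρ.1 (bind₁ (tauP m P (-A)) (bind₁ (tauP m P A) (g i))) = _
  rw [bind₁_tauP_neg]

lemma finrank_pi_complex (α : Type*) [Fintype α] : finrank ℝ (α → ℂ) = 2 * Fintype.card α := by
  rw [Module.finrank_pi_fintype ℝ]
  simp [Complex.finrank_real_complex, Finset.sum_const, mul_comm]

lemma finrank_Vsp : finrank ℝ (Vsp m s d) = ∑ i, 2 * (Mon m (d i)).card := by
  rw [Module.finrank_pi_fintype ℝ]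
  exact Finset.sum_congr rfl fun i _ => by rw [finrank_pi_complex, Fintype.card_coe]

lemma finrank_Esp (P : Finset (Fin (m+1))) (k : ℕ) (hP : P.card = k + 1) :
    finrank ℝ (Esp m s d P) =
      2 * (((m + 1) - (k + 1)) * (k + 1)) + ∑ i, 2 * (MonP m P (d i)).card := by
  rw [Module.finrank_prod, finrank_pi_complex, Fintype.card_prod]
  congr 1
  · rw [Fintype.card_subtype_compl, Fintype.card_coe, hP, Fintype.card_fin]
  · rw [Module.finrank_pi_fintype ℝ]
    exact Finset.sum_congr rfl fun i _ => by rw [finrank_pi_complex, Fintype.card_coe]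

lemma Mon_card_pos (i : Fin s) : 0 < (Mon m (d i)).card := by
  rw [Finset.card_pos]
  refine ⟨Finsupp.single 0 (d i), ?_⟩
  rw [Finset.mem_finsuppAntidiag']
  refine ⟨?_, Finset.subset_univ _⟩
  rw [Finsupp.sum_single_index]
  rfl

end main

/-- If `t > 0`, then `∅ ≠ W_{d,k} ⊊ S*_d`: there is a tuple of nonzero
forms of multidegree `(d₁, …, d_s)` whose common zero locus contains a `k`-dimensional
linear subspace of `ℙ^m`, and also a tuple admitting no such subspace. -/
theorem stmt_17 (m k s : ℕ) (hk : 1 ≤ k) (hs1 : 1 ≤ s) (hs2 : s + 2 ≤ m)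
    (hks : k + s ≤ m) (d : Fin s → ℕ) (hd : ∀ i, 1 ≤ d i) (hprod : 2 < ∏ i, d i)
    (ht : 0 < (∑ i, ((d i + k).choose k : ℤ)) - ((k : ℤ) + 1) * ((m : ℤ) - (k : ℤ))) :
    (∃ g : Fin s → MvPolynomial (Fin (m + 1)) ℂ,
      (∀ i, (g i).IsHomogeneous (d i)) ∧ (∀ i, g i ≠ 0) ∧
      ∃ L : Submodule ℂ (Fin (m + 1) → ℂ),
        Module.finrank ℂ L = k + 1 ∧ ∀ i, ∀ v ∈ L, eval v (g i) = 0) ∧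
    (∃ g : Fin s → MvPolynomial (Fin (m + 1)) ℂ,
      (∀ i, (g i).IsHomogeneous (d i)) ∧ (∀ i, g i ≠ 0) ∧
      ¬ ∃ L : Submodule ℂ (Fin (m + 1) → ℂ),
        Module.finrank ℂ L = k + 1 ∧ ∀ i, ∀ v ∈ L, eval v (g i) = 0) := by
  classical
  have hkm : k + 1 ≤ m := by omega
  constructor
  · -- Part 1: a tuple vanishing on a (k+1)-dimensional subspace
    set jm : Fin (m+1) := ⟨m, by omega⟩ with hjm
    refine ⟨fun i => X jm ^ d i, fun i => ?_, fun i => pow_ne_zero _ (MvPolynomial.X_ne_zero (σ := Fin (m+1)) (R := ℂ) jm), ?_⟩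
    · simpa using (isHomogeneous_X ℂ jm).pow (d i)
    · set F : (Fin (k+1) → ℂ) →ₗ[ℂ] (Fin (m+1) → ℂ) :=
        { toFun := fun v j => if h : (j : ℕ) < k + 1 then v ⟨j, h⟩ else 0,
          map_add' := fun v w => by
            funext j; by_cases h : (j : ℕ) ≤ k <;> simp [h],
          map_smul' := fun c v => by
            funext j; by_cases h : (j : ℕ) ≤ k <;> simp [h] } with hF
      have hFinj : Function.Injective F := by
        intro v w hvw
        funext i
        have h1 := congrFun hvw (Fin.castLE (by omega : k + 1 ≤ m + 1) i)
        have hi : ((Fin.castLE (by omega : k + 1 ≤ m + 1) i : Fin (m+1)) : ℕ) < k + 1 := by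
          simpa using i.2
        simpa [hF, LinearMap.coe_mk, AddHom.coe_mk, dif_pos hi, Fin.eta, Fin.is_le] using h1
      refine ⟨LinearMap.range F, ?_, ?_⟩
      · rw [LinearMap.finrank_range_of_inj hFinj, Module.finrank_fintype_fun_eq_card,
          Fintype.card_fin]
      · intro i v hv
        obtain ⟨w, rfl⟩ := hv
        rw [map_pow, eval_X]
        have hz : F w jm = 0 := by
          show (if h : (jm : ℕ) < k + 1 then w ⟨jm, h⟩ else 0) = 0
          rw [dif_neg (by simp only [hjm]; omega)]
        rw [hz]
        exact zero_pow (by have := hd i; omega)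
  · -- Part 2: a tuple with no such subspace
    set badU : Set (Vsp m s d) :=
      (⋃ P : {P : Finset (Fin (m+1)) // P.card = k + 1}, Set.range (Phi m s d P.1)) ∪
        ⋃ i : Fin s, {v : Vsp m s d | v i = 0} with hbadU
    have hssub : ∀ (i : Fin s) (P : Finset (Fin (m+1))),
        P.finsuppAntidiag (d i) ⊆ Mon m (d i) := by
      intro i P f hf
      rw [Finset.mem_finsuppAntidiag'] at hf ⊢
      exact ⟨hf.1, Finset.subset_univ _⟩
    set D := Module.finrank ℝ (Vsp m s d) with hD
    have hDval : D = 2 * ∑ i, (Mon m (d i)).card := by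
      rw [hD, finrank_Vsp, Finset.mul_sum]
    have hD2 : 2 ≤ D := by
      rw [hDval]
      have h1 : 1 ≤ ∑ i, (Mon m (d i)).card := by
        calc 1 ≤ (Mon m (d ⟨0, hs1⟩)).card := Mon_card_pos m s d ⟨0, hs1⟩
        _ ≤ ∑ i, (Mon m (d i)).card :=
            Finset.single_le_sum (f := fun i : Fin s => (Mon m (d i)).card)
              (fun i _ => Nat.zero_le _) (Finset.mem_univ _)
      omega
    have hchart : ∀ P : {P : Finset (Fin (m+1)) // P.card = k + 1},
        Module.finrank ℝ (Esp m s d P.1) < D := by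
      rintro ⟨P, hP⟩
      rw [finrank_Esp m s d P k hP, hDval]
      have hC : ∀ i : Fin s, (P.finsuppAntidiag (d i)).card = (d i + k).choose k :=
        fun i => card_finsuppAntidiag' hP
      have hCN : ∀ i : Fin s, (P.finsuppAntidiag (d i)).card ≤ (Mon m (d i)).card :=
        fun i => Finset.card_le_card (hssub i P)
      have e1 : ∑ i, 2 * (MonP m P (d i)).card
          = 2 * ((∑ i, (Mon m (d i)).card) - ∑ i, (P.finsuppAntidiag (d i)).card) := by
        rw [← Finset.mul_sum]
        congr 1
        rw [Finset.sum_congr rfl (fun i _ => Finset.card_sdiff_of_subset (hssub i P)),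
          Finset.sum_tsub_distrib _ (fun i _ => hCN i)]
      have e2 : ∑ i, (P.finsuppAntidiag (d i)).card ≤ ∑ i, (Mon m (d i)).card :=
        Finset.sum_le_sum fun i _ => hCN i
      have e3 : (k+1) * (m - k) < ∑ i, (P.finsuppAntidiag (d i)).card := by
        have hcast : ((∑ i, (P.finsuppAntidiag (d i)).card : ℕ) : ℤ)
            = ∑ i, ((d i + k).choose k : ℤ) := by
          push_cast
          exact Finset.sum_congr rfl fun i _ => by rw [hC i]
        have hmk : (((k+1) * (m - k) : ℕ) : ℤ) = ((k : ℤ) + 1) * ((m : ℤ) - (k : ℤ)) := by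
          push_cast [Nat.cast_sub (by omega : k ≤ m)]
          ring
        have h5 : (((k+1) * (m - k) : ℕ) : ℤ) < ((∑ i, (P.finsuppAntidiag (d i)).card : ℕ) : ℤ) := by
          rw [hcast, hmk]
          linarith [ht]
        exact_mod_cast h5
      rw [e1]
      have e4 : (m + 1) - (k + 1) = m - k := by omega
      rw [e4, mul_comm (m - k) (k + 1)]
      set a := ∑ i, (P.finsuppAntidiag (d i)).card
      set b := ∑ i, (Mon m (d i)).card
      set c := (k + 1) * (m - k)
      omega
    have hDfr : (D : ℝ≥0∞) = (Module.finrank ℝ (Vsp m s d) : ℝ≥0∞) := by rw [hD]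
    have hdim : dimH badU < (Module.finrank ℝ (Vsp m s d) : ℝ≥0∞) := by
      rw [hbadU, dimH_union, dimH_iUnion, dimH_iUnion]
      have b1 : (⨆ P : {P : Finset (Fin (m+1)) // P.card = k + 1},
          dimH (Set.range (Phi m s d P.1))) ≤ ((D - 1 : ℕ) : ℝ≥0∞) := by
        apply iSup_le
        intro P
        refine le_trans (ContDiff.dimH_range_le (contDiff_Phi m s d P.1)) ?_
        have h6 : Module.finrank ℝ (Esp m s d P.1) ≤ D - 1 := by
          have := hchart P; omega
        exact_mod_cast h6
      have b2 : (⨆ i : Fin s, dimH {v : Vsp m s d | v i = 0}) ≤ ((D - 1 : ℕ) : ℝ≥0∞) := by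
        apply iSup_le
        intro i
        set Ki := LinearMap.ker (LinearMap.proj (R := ℂ)
          (φ := fun i : Fin s => ({σ // σ ∈ Mon m (d i)} → ℂ)) i) with hKi
        haveI : FiniteDimensional ℝ ↥Ki := Module.Finite.trans ℂ ↥Ki
        have hset : {v : Vsp m s d | v i = 0}
            = Set.range ((Ki.subtypeL).restrictScalars ℝ) := by
          ext v
          constructor
          · intro hv
            exact ⟨⟨v, by simpa [hKi, LinearMap.mem_ker] using hv⟩, rfl⟩
          · rintro ⟨⟨w, hw⟩, rfl⟩
            simpa [hKi, LinearMap.mem_ker] using hw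
        rw [hset]
        refine le_trans (ContDiff.dimH_range_le
          ((Ki.subtypeL.restrictScalars ℝ).contDiff)) ?_
        have hfr : Module.finrank ℝ ↥Ki ≤ D - 1 := by
          have hrn := LinearMap.finrank_range_add_finrank_ker (LinearMap.proj (R := ℂ)
            (φ := fun i : Fin s => ({σ // σ ∈ Mon m (d i)} → ℂ)) i)
          have hsurj : LinearMap.range (LinearMap.proj (R := ℂ)
              (φ := fun i : Fin s => ({σ // σ ∈ Mon m (d i)} → ℂ)) i) = ⊤ := by
            rw [LinearMap.range_eq_top]
            intro y
            exact ⟨Function.update 0 i y, by simp⟩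
          rw [hsurj, finrank_top] at hrn
          have hcompfr : Module.finrank ℂ ({σ // σ ∈ Mon m (d i)} → ℂ)
              = (Mon m (d i)).card := by
            rw [Module.finrank_pi, Fintype.card_coe]
          have hVfr : Module.finrank ℂ (Vsp m s d) = ∑ i, (Mon m (d i)).card := by
            rw [Module.finrank_pi_fintype ℂ]
            exact Finset.sum_congr rfl fun i _ => by
              rw [Module.finrank_pi, Fintype.card_coe]
          have htow := Module.finrank_mul_finrank ℝ ℂ ↥Ki
          rw [Complex.finrank_real_complex] at htow
          have hpos := Mon_card_pos m s d i
          have hle : (Mon m (d i)).card ≤ ∑ i, (Mon m (d i)).card :=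
            Finset.single_le_sum (f := fun i : Fin s => (Mon m (d i)).card)
              (fun i _ => Nat.zero_le _) (Finset.mem_univ _)
          rw [hcompfr, hVfr] at hrn
          have hfr2 : Module.finrank ℝ ↥Ki = 2 * Module.finrank ℂ ↥Ki := htow.symm
          rw [hfr2, hDval]
          rw [show (LinearMap.ker (LinearMap.proj (R := ℂ)
            (φ := fun i : Fin s => ({σ // σ ∈ Mon m (d i)} → ℂ)) i)) = Ki from hKi.symm] at hrn
          omega
        exact_mod_cast hfr
      refine lt_of_le_of_lt (max_le b1 b2) ?_
      rw [← hDfr]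
      have h7 : D - 1 < D := by omega
      exact_mod_cast h7
    obtain ⟨x, hxmem⟩ := (dense_compl_of_dimH_lt_finrank hdim).nonempty
    have hxU : x ∉ (⋃ P : {P : Finset (Fin (m+1)) // P.card = k + 1},
        Set.range (Phi m s d P.1)) := fun hmem => hxmem (Or.inl hmem)
    have hxZ : ∀ i, x i ≠ 0 := fun i h0 => hxmem (Or.inr (Set.mem_iUnion.mpr ⟨i, h0⟩))
    set g : Fin s → MvPolynomial (Fin (m+1)) ℂ :=
      fun i => ∑ σ : {σ // σ ∈ Mon m (d i)}, monomial σ.1 (x i σ) with hg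
    have hcoeff : ∀ (i : Fin s) (ρ : {σ // σ ∈ Mon m (d i)}), coeff ρ.1 (g i) = x i ρ := by
      intro i ρ
      rw [hg]
      show coeff ρ.1 (∑ σ : {σ // σ ∈ Mon m (d i)}, monomial σ.1 (x i σ)) = x i ρ
      rw [MvPolynomial.coeff_sum]
      have hterm : ∀ σ : {σ // σ ∈ Mon m (d i)},
          coeff ρ.1 (monomial σ.1 (x i σ)) = if σ = ρ then x i σ else 0 := by
        intro σ
        rw [coeff_monomial]
        by_cases h : σ = ρ
        · rw [if_pos h, if_pos (by rw [h])]
        · rw [if_neg h, if_neg (fun hc => h (Subtype.ext hc))]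
      rw [Finset.sum_congr rfl (fun σ _ => hterm σ), Finset.sum_ite_eq' Finset.univ ρ]
      simp
    have hhom : ∀ i, (g i).IsHomogeneous (d i) := by
      intro i
      rw [hg]
      apply IsHomogeneous.sum
      intro σ _
      apply isHomogeneous_monomial
      have hsum := (Finset.mem_finsuppAntidiag'.mp σ.2).1
      simpa [Finsupp.degree_apply, Finsupp.sum] using hsum
    refine ⟨g, hhom, ?_, ?_⟩
    · intro i
      obtain ⟨ρ, hρ⟩ := Function.ne_iff.mp (hxZ i)
      rw [MvPolynomial.ne_zero_iff]
      exact ⟨ρ.1, by rw [hcoeff i ρ]; exact hρ⟩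
    · rintro ⟨L, hfin, hvan⟩
      obtain ⟨P, hPcard, hmem⟩ := covering m s d k g hhom L hfin hvan
      apply hxU
      apply Set.mem_iUnion.mpr
      refine ⟨⟨P, hPcard⟩, ?_⟩
      have hxg : (fun i ρ => coeff ρ.1 (g i)) = x :=
        by funext i ρ; exact hcoeff i ρ
      rw [← hxg]
      exact hmem
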